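/- arXiv:1311.5265 — 3 statements merged into one kernel-verified Lean document; each statement's English description precedes it below -/
import Mathlib

section
/- Let S_0,…,S_{N-1} satisfy the Cuntz relations on H, let M be a closed subspace with orthogonal projection P_M, and let α(A) = Σ_i S_i A S_i*. Then M is invariant for all the operators S_i* (i.e., S_i* M ⊆ M for every i) if and only if P_M ≤ α(P_M). -/
open ContinuousLinearMap

set_option maxHeartbeats 1000000 in
/-- `M` is invariant under every `S i*` iff `P_M ≤ α(P_M)`,
where `α(A) = ∑ i, S i A S i*` and the operator order is the positivity (Loewner) order. -/
theorem cuntz_invariant_iff_le_alpha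
    {H : Type*} [NormedAddCommGroup H] [InnerProductSpace ℂ H] [CompleteSpace H]
    (N : ℕ) (hN : 2 ≤ N) (S : Fin N → H →L[ℂ] H)
    (hiso : ∀ i j : Fin N, adjoint (S i) ∘L S j = if i = j then 1 else 0)
    (hsum : ∑ i : Fin N, S i ∘L adjoint (S i) = 1)
    (M : Submodule ℂ H) [CompleteSpace M]
    (P : H →L[ℂ] H) (hP : P = M.subtypeL ∘L M.orthogonalProjectionOnto) :
    (∀ i : Fin N, ∀ x ∈ M, adjoint (S i) x ∈ M) ↔
      ((∑ i : Fin N, S i ∘L P ∘L adjoint (S i)) - P).IsPositive := by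
  set Q : H →L[ℂ] H := ∑ i : Fin N, S i ∘L P ∘L adjoint (S i) with hQ
  -- basic facts about P
  have hPmem : ∀ x : H, P x ∈ M := by
    intro x; rw [hP]; exact (M.orthogonalProjectionOnto x).2
  have hPfix : ∀ x ∈ M, P x = x := by
    intro x hx; rw [hP]
    exact Submodule.starProjection_eq_self_iff.mpr hx
  have hPsa : IsSelfAdjoint P := hP ▸ isSelfAdjoint_starProjection M
  have hPsymm : ∀ u v : H, (inner ℂ (P u) v : ℂ) = inner ℂ u (P v) :=
    fun u v => (isSelfAdjoint_iff_isSymmetric.mp hPsa) u v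
  have hPorth : ∀ v : H, (inner ℂ (P v) (v - P v) : ℂ) = 0 := by
    intro v
    have h1 : v - P v ∈ Mᗮ := by
      rw [hP]; exact Submodule.sub_starProjection_mem_orthogonal (K := M) v
    exact (Submodule.inner_right_of_mem_orthogonal (hPmem v) h1)
  have hPyth : ∀ v : H, ‖P v‖ ^ 2 + ‖v - P v‖ ^ 2 = ‖v‖ ^ 2 := by
    intro v
    have h := (norm_add_sq_eq_norm_sq_add_norm_sq_of_inner_eq_zero (P v) (v - P v)
      (hPorth v)).symm
    have hv : P v + (v - P v) = v := by abel
    rw [hv] at h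
    rw [pow_two, pow_two, pow_two]
    exact h
  have hPinner : ∀ v : H, RCLike.re (inner ℂ (P v) v : ℂ) = ‖P v‖ ^ 2 := by
    intro v
    have : (inner ℂ (P v) v : ℂ) = inner ℂ (P v) (P v) + inner ℂ (P v) (v - P v) := by
      rw [← inner_add_right]
      congr 1
      abel
    rw [this, hPorth v, add_zero, inner_self_eq_norm_sq]
  -- apply Q pointwise
  have hQapp : ∀ x : H, Q x = ∑ i : Fin N, S i (P (adjoint (S i) x)) := by
    intro x; rw [hQ]; simp [ContinuousLinearMap.sum_apply]
  have hisop : ∀ (i j : Fin N) (v : H),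
      adjoint (S i) (S j v) = if i = j then v else 0 := by
    intro i j v
    have h := congrArg (fun T : H →L[ℂ] H => T v) (hiso i j)
    simp only [ContinuousLinearMap.comp_apply] at h
    refine h.trans ?_
    split_ifs <;> simp

  -- re ⟪Q x, x⟫ = ∑ ‖P (Sᵢ* x)‖²
  have hQinner : ∀ x : H,
      RCLike.re (inner ℂ (Q x) x : ℂ) = ∑ i : Fin N, ‖P (adjoint (S i) x)‖ ^ 2 := by
    intro x
    rw [hQapp, sum_inner, map_sum]
    refine Finset.sum_congr rfl fun i _ => ?_
    rw [← adjoint_inner_right, hPinner]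
  -- ∑ ‖Sᵢ* x‖² = ‖x‖²
  have hnorm : ∀ x : H, ∑ i : Fin N, ‖adjoint (S i) x‖ ^ 2 = ‖x‖ ^ 2 := by
    intro x
    have hx : (∑ i : Fin N, S i (adjoint (S i) x)) = x := by
      have := congrArg (fun T : H →L[ℂ] H => T x) hsum
      simpa [ContinuousLinearMap.sum_apply] using this
    have h1 : (inner ℂ x x : ℂ)
        = ∑ i : Fin N, inner ℂ (adjoint (S i) x) (adjoint (S i) x) :=
      calc (inner ℂ x x : ℂ) = inner ℂ (∑ i : Fin N, S i (adjoint (S i) x)) x := by rw [hx]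
        _ = ∑ i : Fin N, inner ℂ (adjoint (S i) x) (adjoint (S i) x) := by
            rw [sum_inner]
            exact Finset.sum_congr rfl fun i _ => by rw [← adjoint_inner_right]
    have h2 := congrArg RCLike.re h1
    rw [inner_self_eq_norm_sq, map_sum] at h2
    simp only [inner_self_eq_norm_sq] at h2
    exact h2.symm
  constructor
  · -- invariance → positivity
    intro hinv
    -- Q fixes M
    have hQfix : ∀ y ∈ M, Q y = y := by
      intro y hy
      rw [hQapp]
      have : ∀ i : Fin N, S i (P (adjoint (S i) y)) = S i (adjoint (S i) y) := by
        intro i; rw [hPfix _ (hinv i y hy)]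
      rw [Finset.sum_congr rfl fun i _ => this i]
      have := congrArg (fun T : H →L[ℂ] H => T y) hsum
      simpa [ContinuousLinearMap.sum_apply] using this
    -- Q is idempotent
    have hQQ : ∀ x : H, Q (Q x) = Q x := by
      intro x
      rw [hQapp x, map_sum]
      have hterm : ∀ j : Fin N, Q (S j (P (adjoint (S j) x)))
          = S j (P (adjoint (S j) x)) := by
        intro j
        rw [hQapp]
        have : ∀ i : Fin N, S i (P (adjoint (S i) (S j (P (adjoint (S j) x)))))
            = if i = j then S j (P (adjoint (S j) x)) else 0 := by
          intro i
          rw [hisop i j]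
          by_cases h : i = j
          · subst h; simp [hPfix _ (hPmem _)]
          · simp [h]
        rw [Finset.sum_congr rfl fun i _ => this i, Finset.sum_ite_eq' _ j]
        simp
      rw [Finset.sum_congr rfl fun j _ => hterm j, ← hQapp]
    -- Q is self-adjoint
    have hQsa : IsSelfAdjoint Q := by
      rw [hQ]
      refine Finset.sum_induction _ _ (fun a b ha hb => ha.add hb) (IsSelfAdjoint.zero _) ?_
      intro i _
      have := hPsa.conj_adjoint (S i)
      rwa [← ContinuousLinearMap.comp_assoc] at this
    refine ⟨isSelfAdjoint_iff_isSymmetric.mp (hQsa.sub hPsa), fun x => ?_⟩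
    have hQself : RCLike.re (inner ℂ (Q x) x : ℂ) = ‖Q x‖ ^ 2 := by
      have h1 : (inner ℂ (Q x) x : ℂ) = inner ℂ (Q x) (Q x) := by
        conv_lhs => rw [← hQQ x]
        exact (isSelfAdjoint_iff_isSymmetric.mp hQsa) (Q x) x
      rw [h1, inner_self_eq_norm_sq]
    have hPQ : ‖P x‖ ^ 2 ≤ ‖P x‖ * ‖Q x‖ := by
      have h1 : (inner ℂ (P x) x : ℂ) = inner ℂ (P x) (Q x) := by
        conv_lhs => rw [← hQfix (P x) (hPmem x)]
        exact (isSelfAdjoint_iff_isSymmetric.mp hQsa) (P x) x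
      have h2 : RCLike.re (inner ℂ (P x) (Q x) : ℂ) ≤ ‖P x‖ * ‖Q x‖ := by
        calc RCLike.re (inner ℂ (P x) (Q x) : ℂ) ≤ ‖(inner ℂ (P x) (Q x) : ℂ)‖ :=
              le_trans (le_abs_self _) (RCLike.abs_re_le_norm _)
          _ ≤ ‖P x‖ * ‖Q x‖ := norm_inner_le_norm _ _
      calc ‖P x‖ ^ 2 = RCLike.re (inner ℂ (P x) x : ℂ) := (hPinner x).symm
        _ = RCLike.re (inner ℂ (P x) (Q x) : ℂ) := by rw [h1]
        _ ≤ ‖P x‖ * ‖Q x‖ := h2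
    have key : ‖P x‖ ^ 2 ≤ ‖Q x‖ ^ 2 := by
      nlinarith [norm_nonneg (P x), norm_nonneg (Q x), sq_nonneg (‖P x‖ - ‖Q x‖)]
    show 0 ≤ RCLike.re (inner ℂ ((Q - P) x) x : ℂ)
    rw [ContinuousLinearMap.sub_apply, inner_sub_left, map_sub, hQself, hPinner]
    linarith
  · -- positivity → invariance
    intro hpos i x hx
    have hposx := hpos.2 x
    rw [reApplyInnerSelf, ContinuousLinearMap.sub_apply, inner_sub_left, map_sub,
      hQinner, hPinner, hPfix x hx] at hposx
    -- so ‖x‖² ≤ ∑ ‖P (Sᵢ* x)‖²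
    have h1 : ‖x‖ ^ 2 ≤ ∑ j : Fin N, ‖P (adjoint (S j) x)‖ ^ 2 := by linarith
    have h2 : ∀ j : Fin N, ‖P (adjoint (S j) x)‖ ^ 2 ≤ ‖adjoint (S j) x‖ ^ 2 := by
      intro j
      have := hPyth (adjoint (S j) x)
      nlinarith [sq_nonneg ‖adjoint (S j) x - P (adjoint (S j) x)‖]
    have h3 : ∑ j : Fin N, ‖P (adjoint (S j) x)‖ ^ 2
        = ∑ j : Fin N, ‖adjoint (S j) x‖ ^ 2 := by
      have hle := Finset.sum_le_sum (fun j (_ : j ∈ Finset.univ) => h2 j)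
      have := hnorm x
      linarith
    have h4 := (Finset.sum_eq_sum_iff_of_le (fun j (_ : j ∈ Finset.univ) => h2 j)).mp h3
      i (Finset.mem_univ i)
    -- equality of norms forces P (Sᵢ* x) = Sᵢ* x
    have h5 : ‖adjoint (S i) x - P (adjoint (S i) x)‖ ^ 2 = 0 := by
      have := hPyth (adjoint (S i) x)
      linarith
    have h6 : adjoint (S i) x = P (adjoint (S i) x) := by
      have h7 : adjoint (S i) x - P (adjoint (S i) x) = 0 :=
        norm_eq_zero.mp (sq_eq_zero_iff.mp h5)
      exact sub_eq_zero.mp h7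
    rw [h6]
    exact hPmem _
end

section
/- Let S_0,…,S_{N-1} satisfy the Cuntz relations on H and let M be a closed subspace invariant for all S_i* which is also cyclic (the closed span of all vectors S_I S_J* v with v ∈ M and I, J finite words equals H). Then for every v ∈ H and every ε > 0 there exists n_ε such that for every finite word I with |I| ≥ n_ε, ‖P_M S_I* v − S_I* v‖ < ε. -/
open ContinuousLinearMap
open scoped InnerProductSpace

section Aux

variable {H : Type*} [NormedAddCommGroup H] [InnerProductSpace ℂ H] [CompleteSpace H]

private lemma cuntz_prod_isometry {N : ℕ} (S : Fin N → H →L[ℂ] H)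
    (hiso : ∀ i j : Fin N, adjoint (S i) ∘L S j = if i = j then 1 else 0) :
    ∀ I : List (Fin N), adjoint ((I.map S).prod) ∘L (I.map S).prod = 1 := by
  intro I
  induction I with
  | nil => simp [ContinuousLinearMap.one_def, adjoint_id]
  | cons i I ih =>
    have h : adjoint (((i :: I).map S).prod) ∘L ((i :: I).map S).prod
        = adjoint ((I.map S).prod) ∘L ((adjoint (S i) ∘L S i) ∘L (I.map S).prod) := by
      simp only [List.map_cons, List.prod_cons, ContinuousLinearMap.mul_def, adjoint_comp, comp_assoc]
    rw [h, hiso i i]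
    simpa [ContinuousLinearMap.one_def] using ih

private lemma cuntz_isom_norm (T : H →L[ℂ] H) (h : adjoint T ∘L T = 1) (x : H) :
    ‖T x‖ = ‖x‖ := by
  have key : ⟪T x, T x⟫_ℂ = ⟪x, x⟫_ℂ := by
    rw [← ContinuousLinearMap.adjoint_inner_left]
    have : adjoint T (T x) = x := by
      have := congrArg (fun A : H →L[ℂ] H => A x) h
      simpa using this
    rw [this]
  rw [norm_eq_sqrt_re_inner (𝕜 := ℂ), norm_eq_sqrt_re_inner (𝕜 := ℂ) x, key]

private lemma cuntz_adj_contract (T : H →L[ℂ] H) (h : adjoint T ∘L T = 1) (v : H) :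
    ‖adjoint T v‖ ≤ ‖v‖ := by
  rcases eq_or_ne (adjoint T v) 0 with h0 | h0
  · simp [h0]
  have h1 : ‖adjoint T v‖ ^ 2 = RCLike.re ⟪adjoint T v, adjoint T v⟫_ℂ := by
    rw [@inner_self_eq_norm_sq ℂ]
  have h2 : ⟪adjoint T v, adjoint T v⟫_ℂ = ⟪v, T (adjoint T v)⟫_ℂ := by
    rw [ContinuousLinearMap.adjoint_inner_left]
  have h3 : RCLike.re ⟪v, T (adjoint T v)⟫_ℂ ≤ ‖v‖ * ‖T (adjoint T v)‖ := re_inner_le_norm _ _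
  rw [cuntz_isom_norm T h] at h3
  have h4 : ‖adjoint T v‖ ^ 2 ≤ ‖v‖ * ‖adjoint T v‖ := by rw [h1, h2]; exact h3
  have hpos : 0 < ‖adjoint T v‖ := norm_pos_iff.mpr h0
  nlinarith

private lemma cuntz_proj_sub_le (M : Submodule ℂ H) [CompleteSpace M] (x : H) :
    ‖(M.subtypeL ∘L M.orthogonalProjection) x - x‖ ≤ ‖x‖ := by
  set p : H := (M.orthogonalProjection x : H) with hp
  have hmem : x - p ∈ Mᗮ := Submodule.sub_starProjection_mem_orthogonal x
  have hinner : ⟪p, x - p⟫_ℂ = 0 := hmem p (M.orthogonalProjection x).2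
  have hx : x = p + (x - p) := by abel
  have hsq : ‖x‖ ^ 2 = ‖p‖ ^ 2 + ‖x - p‖ ^ 2 := by
    rw [hx]
    have := norm_add_sq (𝕜 := ℂ) p (x - p)
    simpa [hinner] using this
  have h1 : ‖x - p‖ ^ 2 ≤ ‖x‖ ^ 2 := by nlinarith [sq_nonneg ‖p‖]
  have h2 : ‖x - p‖ ≤ ‖x‖ := by nlinarith [norm_nonneg (x - p), norm_nonneg x]
  calc ‖(M.subtypeL ∘L M.orthogonalProjection) x - x‖ = ‖x - p‖ := by
        rw [norm_sub_rev]; rfl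
    _ ≤ ‖x‖ := h2

private lemma cuntz_adj_prod_mem {N : ℕ} (S : Fin N → H →L[ℂ] H)
    (M : Submodule ℂ H) (hinv : ∀ i : Fin N, ∀ x ∈ M, adjoint (S i) x ∈ M) :
    ∀ (J : List (Fin N)) (x : H), x ∈ M → adjoint ((J.map S).prod) x ∈ M := by
  intro J
  induction J with
  | nil => intro x hx; simpa [ContinuousLinearMap.one_def, adjoint_id] using hx
  | cons j J ih =>
    intro x hx
    have h : adjoint (((j :: J).map S).prod) x
        = adjoint ((J.map S).prod) (adjoint (S j) x) := by
      simp only [List.map_cons, List.prod_cons, ContinuousLinearMap.mul_def,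
        adjoint_comp, comp_apply]
    rw [h]
    exact ih _ (hinv j x hx)

private lemma cuntz_prefix {N : ℕ} (S : Fin N → H →L[ℂ] H)
    (hiso : ∀ i j : Fin N, adjoint (S i) ∘L S j = if i = j then 1 else 0) :
    ∀ (I K : List (Fin N)), I.length ≤ K.length →
      (adjoint ((K.map S).prod) ∘L (I.map S).prod = 0) ∨
      ∃ K' : List (Fin N),
        adjoint ((K.map S).prod) ∘L (I.map S).prod = adjoint ((K'.map S).prod) := by
  intro I
  induction I with
  | nil => intro K _; right; exact ⟨K, by simp [ContinuousLinearMap.one_def]⟩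
  | cons i I ih =>
    intro K hlen
    cases K with
    | nil => simp at hlen
    | cons k K =>
      have h : adjoint (((k :: K).map S).prod) ∘L ((i :: I).map S).prod
          = adjoint ((K.map S).prod) ∘L ((adjoint (S k) ∘L S i) ∘L (I.map S).prod) := by
        simp only [List.map_cons, List.prod_cons, ContinuousLinearMap.mul_def, adjoint_comp, comp_assoc]
      rw [h, hiso k i]
      by_cases hk : k = i
      · rw [if_pos hk]
        have hlen' : I.length ≤ K.length := by simpa using hlen
        simpa [ContinuousLinearMap.one_def] using ih K hlen'
      · left; rw [if_neg hk, zero_comp, comp_zero]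

end Aux

/-- for a cyclic `(S i*)`-invariant closed subspace `M`, for every `v` and
`ε > 0` there is `n_ε` with `‖P_M S_I* v − S_I* v‖ < ε` whenever `|I| ≥ n_ε`. -/
theorem cuntz_cyclic_invariant_asymptotic
    {H : Type*} [NormedAddCommGroup H] [InnerProductSpace ℂ H] [CompleteSpace H]
    (N : ℕ) (hN : 2 ≤ N) (S : Fin N → H →L[ℂ] H)
    (hiso : ∀ i j : Fin N, adjoint (S i) ∘L S j = if i = j then 1 else 0)
    (hsum : ∑ i : Fin N, S i ∘L adjoint (S i) = 1)
    (M : Submodule ℂ H) [CompleteSpace M]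
    (hinv : ∀ i : Fin N, ∀ x ∈ M, adjoint (S i) x ∈ M)
    (hcyc : (Submodule.span ℂ {x : H | ∃ (I J : List (Fin N)) (u : H), u ∈ M ∧
        ((I.map S).prod ∘L adjoint ((J.map S).prod)) u = x}).topologicalClosure = ⊤)
    (P : H →L[ℂ] H) (hP : P = M.subtypeL ∘L M.orthogonalProjection) :
    ∀ v : H, ∀ ε : ℝ, 0 < ε → ∃ nε : ℕ, ∀ I : List (Fin N), nε ≤ I.length →
      ‖P (adjoint ((I.map S).prod) v) - adjoint ((I.map S).prod) v‖ < ε := by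
  intro v ε hε
  set G : Set H := {x : H | ∃ (I J : List (Fin N)) (u : H), u ∈ M ∧
      ((I.map S).prod ∘L adjoint ((J.map S).prod)) u = x} with hG
  -- every element of the span eventually lands in M under long adjoint products
  have key : ∀ w ∈ Submodule.span ℂ G, ∃ n : ℕ, ∀ K : List (Fin N), n ≤ K.length →
      adjoint ((K.map S).prod) w ∈ M := by
    intro w hw
    induction hw using Submodule.span_induction with
    | mem x hx =>
      obtain ⟨I, J, u, hu, hx⟩ := hx
      refine ⟨I.length, fun K hK => ?_⟩
      rcases cuntz_prefix S hiso I K hK with h0 | ⟨K', hK'⟩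
      · have : adjoint ((K.map S).prod) x = 0 := by
          rw [← hx]
          have := congrArg (fun A : H →L[ℂ] H => A (adjoint ((J.map S).prod) u))
            h0
          simpa using this
        rw [this]; exact M.zero_mem
      · have : adjoint ((K.map S).prod) x
            = adjoint ((K'.map S).prod) (adjoint ((J.map S).prod) u) := by
          rw [← hx]
          have := congrArg (fun A : H →L[ℂ] H => A (adjoint ((J.map S).prod) u)) hK'
          simpa using this
        rw [this]
        exact cuntz_adj_prod_mem S M hinv K' _ (cuntz_adj_prod_mem S M hinv J u hu)
    | zero => exact ⟨0, fun K _ => by simpa using M.zero_mem⟩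
    | add x y hx hy ihx ihy =>
      obtain ⟨nx, hnx⟩ := ihx
      obtain ⟨ny, hny⟩ := ihy
      refine ⟨max nx ny, fun K hK => ?_⟩
      rw [map_add]
      exact M.add_mem (hnx K (le_trans (le_max_left _ _) hK))
        (hny K (le_trans (le_max_right _ _) hK))
    | smul a x hx ihx =>
      obtain ⟨n, hn⟩ := ihx
      exact ⟨n, fun K hK => by rw [map_smul]; exact M.smul_mem a (hn K hK)⟩
  -- density
  have hv : v ∈ closure (Submodule.span ℂ G : Set H) := by
    have : v ∈ (Submodule.span ℂ G).topologicalClosure := by rw [hcyc]; trivial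
    exact this
  obtain ⟨w, hw, hwd⟩ := Metric.mem_closure_iff.mp hv (ε / 2) (by positivity)
  obtain ⟨n, hn⟩ := key w hw
  refine ⟨n, fun K hK => ?_⟩
  set T : H →L[ℂ] H := adjoint ((K.map S).prod) with hT
  have hTw : T w ∈ M := hn K hK
  have hPTw : P (T w) = T w := by
    rw [hP]
    simp only [comp_apply, Submodule.subtypeL_apply]
    exact Submodule.starProjection_eq_self_iff.mpr hTw
  have split : P (T v) - T v = (P (T w) - T w) + (P (T (v - w)) - T (v - w)) := by
    simp only [map_sub]
    abel
  have hcontract : ‖T (v - w)‖ ≤ ‖v - w‖ := by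
    rw [hT]
    exact cuntz_adj_contract _ (cuntz_prod_isometry S hiso K) _
  have hproj : ‖P (T (v - w)) - T (v - w)‖ ≤ ‖T (v - w)‖ := by
    rw [hP]
    exact cuntz_proj_sub_le M _
  have hdist : ‖v - w‖ < ε / 2 := by rw [← dist_eq_norm]; exact hwd
  calc ‖P (T v) - T v‖ = ‖P (T (v - w)) - T (v - w)‖ := by
        rw [split, hPTw]; simp
    _ ≤ ‖T (v - w)‖ := hproj
    _ ≤ ‖v - w‖ := hcontract
    _ < ε := by linarith
end

section
/- Let S_0,…,S_{N-1} satisfy the Cuntz relations on H, and let ω = (ω_1, ω_2, …) be an infinite word in {0,…,N-1}^ℕ that is not eventually periodic (there are no k ≠ k' with σ^k(ω) = σ^{k'}(ω), where σ is the left shift). Suppose v ∈ H is a unit vector such that S_{ω_1…ω_k} S_{ω_1…ω_k}* v = v for every k ≥ 1. If M is a finite-dimensional cyclic subspace invariant for all S_i*, then v = 0; i.e., no such nonzero vector exists. -/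
open ContinuousLinearMap

section aux
variable {H : Type*} [NormedAddCommGroup H] [InnerProductSpace ℂ H] [CompleteSpace H]
  {N : ℕ} {S : Fin N → H →L[ℂ] H}

local notation "⟪" x ", " y "⟫" => @inner ℂ _ _ x y

lemma cuntz_lemA (hiso : ∀ i j : Fin N, adjoint (S i) ∘L S j = if i = j then 1 else 0) :
    ∀ I J : List (Fin N), I.length = J.length →
      adjoint ((I.map S).prod) ∘L ((J.map S).prod) = if I = J then 1 else 0 := by
  intro I
  induction I with
  | nil =>
    intro J hJ
    rw [List.length_nil] at hJ
    obtain rfl : J = [] := List.eq_nil_of_length_eq_zero hJ.symm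
    simp only [List.map_nil, List.prod_nil, if_pos rfl]
    rw [show ((1 : H →L[ℂ] H)) = ContinuousLinearMap.id ℂ H from rfl, adjoint_id]
    rfl
  | cons i I ih =>
    intro J hJ
    cases J with
    | nil => simp at hJ
    | cons j J =>
      simp only [List.length_cons, Nat.add_right_cancel_iff] at hJ
      simp only [List.map_cons, List.prod_cons]
      rw [show (S i * (I.map S).prod) = S i ∘L (I.map S).prod from rfl,
        show (S j * (J.map S).prod) = S j ∘L (J.map S).prod from rfl,
        adjoint_comp, comp_assoc, ← comp_assoc (adjoint (S i)), hiso i j]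
      by_cases hij : i = j
      · subst hij
        rw [if_pos rfl]
        rw [show ((1 : H →L[ℂ] H) ∘L (J.map S).prod) = (J.map S).prod from one_mul _, ih J hJ]
        by_cases hIJ : I = J
        · rw [if_pos hIJ, if_pos (by rw [hIJ])]
        · rw [if_neg hIJ, if_neg (by simp [hIJ])]
      · rw [if_neg hij, if_neg (by simp [hij] : ¬(i :: I = j :: J))]
        simp only [zero_comp, comp_zero]

lemma cuntz_norm_eq_of_inner_self {x y : H} (h : ⟪x, x⟫ = ⟪y, y⟫) : ‖x‖ = ‖y‖ := by
  rw [inner_self_eq_norm_sq_to_K, inner_self_eq_norm_sq_to_K] at h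
  have h2 : (‖x‖ : ℝ) ^ 2 = ‖y‖ ^ 2 := by exact_mod_cast h
  nlinarith [norm_nonneg x, norm_nonneg y]

lemma cuntz_memM (M : Submodule ℂ H) (hinv : ∀ i : Fin N, ∀ x ∈ M, adjoint (S i) x ∈ M) :
    ∀ (J : List (Fin N)) (u : H), u ∈ M → adjoint ((J.map S).prod) u ∈ M := by
  intro J
  induction J with
  | nil =>
    intro u hu
    rw [show ((List.map S []).prod : H →L[ℂ] H) = ContinuousLinearMap.id ℂ H from rfl, adjoint_id]
    exact hu
  | cons j J ih =>
    intro u hu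
    have : ((j :: J).map S).prod = S j ∘L (J.map S).prod := rfl
    rw [this, adjoint_comp, comp_apply]
    exact ih _ (hinv j u hu)

end aux

/-- in a representation of `O_N` with a finite dimensional cyclic
`(S i*)`-invariant subspace, there is no unit vector in the atom of a non-periodic
infinite word `ω`. -/
theorem cuntz_no_nonperiodic_atom_of_finiteDimensional_cyclic_invariant
    {H : Type*} [NormedAddCommGroup H] [InnerProductSpace ℂ H] [CompleteSpace H]
    (N : ℕ) (hN : 2 ≤ N) (S : Fin N → H →L[ℂ] H)
    (hiso : ∀ i j : Fin N, adjoint (S i) ∘L S j = if i = j then 1 else 0)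
    (hsum : ∑ i : Fin N, S i ∘L adjoint (S i) = 1)
    (ω : ℕ → Fin N)
    (hnp : ∀ k k' : ℕ, k ≠ k' → (fun n => ω (n + k)) ≠ (fun n => ω (n + k')))
    (v : H) (hv : ‖v‖ = 1)
    (hfix : ∀ k : ℕ, 1 ≤ k →
      (((List.ofFn fun j : Fin k => ω j).map S).prod ∘L
        adjoint (((List.ofFn fun j : Fin k => ω j).map S).prod)) v = v)
    (M : Submodule ℂ H) [FiniteDimensional ℂ M]
    (hinv : ∀ i : Fin N, ∀ x ∈ M, adjoint (S i) x ∈ M)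
    (hcyc : (Submodule.span ℂ {x : H | ∃ (I J : List (Fin N)) (u : H), u ∈ M ∧
        ((I.map S).prod ∘L adjoint ((J.map S).prod)) u = x}).topologicalClosure = ⊤) :
    False := by
  classical
  haveI : CompleteSpace M := FiniteDimensional.complete ℂ M
  set W : ℕ → List (Fin N) := fun k => List.ofFn fun j : Fin k => ω j with hWdef
  set T : ℕ → (H →L[ℂ] H) := fun k => ((W k).map S).prod with hTdef
  set Wseg : ℕ → ℕ → List (Fin N) := fun k m => List.ofFn fun j : Fin m => ω (k + j)
    with hWsegdef
  set Tseg : ℕ → ℕ → (H →L[ℂ] H) := fun k m => ((Wseg k m).map S).prod with hTsegdef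
  set vk : ℕ → H := fun k => adjoint (T k) v with hvkdef
  have hWlen : ∀ k, (W k).length = k := fun k => List.length_ofFn
  have hWseglen : ∀ k m, (Wseg k m).length = m := fun k m => List.length_ofFn
  have hWadd : ∀ k m, W (k + m) = W k ++ Wseg k m := by
    intro k m
    rw [hWdef, hWsegdef]
    simp only
    rw [List.ofFn_add]
    rfl
  have hTadd : ∀ k m, T (k + m) = T k ∘L Tseg k m := by
    intro k m
    rw [hTdef]
    simp only
    rw [hWadd, List.map_append, List.prod_append]
    rfl
  have hfix0 : ∀ k, T k (vk k) = v := by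
    intro k
    rcases Nat.eq_zero_or_pos k with rfl | hk
    · have h1 : T 0 = 1 := by simp [hTdef, hWdef]
      simp [hvkdef, h1, show ((1:H →L[ℂ] H)) = ContinuousLinearMap.id ℂ H from rfl, adjoint_id]
    · have := hfix k hk
      rw [comp_apply] at this
      exact this
  have hseg : ∀ k m, vk k = Tseg k m (vk (k + m)) := by
    intro k m
    have h1 : vk k = adjoint (T k) (T (k + m) (vk (k + m))) := by rw [hfix0]
    rw [h1, hTadd, comp_apply, ← comp_apply (adjoint (T k)) (T k),
      cuntz_lemA hiso (W k) (W k) rfl, if_pos rfl]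
    rfl
  have hnormvk : ∀ k, ‖vk k‖ = 1 := by
    intro k
    rw [← hv]
    refine cuntz_norm_eq_of_inner_self ?_
    have h : @inner ℂ _ _ (vk k) (vk k) = @inner ℂ _ _ v (T k (vk k)) :=
      adjoint_inner_left (T k) (vk k) v
    rw [hfix0 k] at h
    exact h
  have horth : Orthonormal ℂ vk := by
    rw [orthonormal_iff_ite]
    intro k k'
    by_cases hkk : k = k'
    · subst hkk
      rw [if_pos rfl, inner_self_eq_norm_sq_to_K, hnormvk]
      norm_num
    · rw [if_neg hkk]
      obtain ⟨n, hn⟩ : ∃ n, ω (n + k) ≠ ω (n + k') := by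
        by_contra hc
        push_neg at hc
        exact hnp k k' hkk (funext hc)
      set m := n + 1 with hm
      have hne : Wseg k m ≠ Wseg k' m := by
        intro h
        rw [hWsegdef] at h
        simp only at h
        rw [List.ofFn_inj] at h
        have := congrFun h ⟨n, Nat.lt_succ_self n⟩
        simp only at this
        exact hn (by rw [Nat.add_comm n k, Nat.add_comm n k']; exact_mod_cast this)
      rw [hseg k m, hseg k' m, ← adjoint_inner_left,
        ← comp_apply (adjoint (Tseg k' m)) (Tseg k m)]
      rw [hTsegdef]
      simp only
      rw [cuntz_lemA hiso _ _ (by rw [hWseglen, hWseglen]),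
        if_neg (fun h => hne h.symm)]
      simp
  -- contraction property of adjoints
  have hSnorm : ∀ (i : Fin N) (x : H), ‖S i x‖ = ‖x‖ := by
    intro i x
    refine cuntz_norm_eq_of_inner_self ?_
    rw [← adjoint_inner_left, ← comp_apply, hiso i i, if_pos rfl]
    rfl
  have hcontr : ∀ (i : Fin N) (x : H), ‖adjoint (S i) x‖ ≤ ‖x‖ := by
    intro i x
    have h1 : ‖adjoint (S i)‖ = ‖S i‖ := LinearIsometryEquiv.norm_map adjoint (S i)
    have h2 : ‖S i‖ ≤ 1 := by
      refine opNorm_le_bound _ zero_le_one fun y => ?_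
      rw [hSnorm, one_mul]
    calc ‖adjoint (S i) x‖ ≤ ‖adjoint (S i)‖ * ‖x‖ := le_opNorm _ _
      _ ≤ 1 * ‖x‖ := by
          refine mul_le_mul_of_nonneg_right ?_ (norm_nonneg _)
          rw [h1]; exact h2
      _ = ‖x‖ := one_mul _
  set P : H → H := fun x => (M.orthogonalProjectionOnto x : H) with hPdef
  have hPmem : ∀ x, P x ∈ M := fun x => (M.orthogonalProjectionOnto x).2
  have hPinner : ∀ (x : H) (u : H), u ∈ M → @inner ℂ _ _ u x = @inner ℂ _ _ u (P x) := by
    intro x u hu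
    have h1 : x - P x ∈ Mᗮ := Submodule.sub_starProjection_mem_orthogonal (K := M) x
    have h2 : @inner ℂ _ _ u (x - P x) = 0 := (Submodule.mem_orthogonal M _).mp h1 u hu
    rw [inner_sub_right] at h2
    linear_combination h2
  -- monotonicity
  have hmono : ∀ k, ‖P (vk k)‖ ≤ ‖P (vk (k + 1))‖ := by
    intro k
    set a : H := P (vk k) with ha
    have hstep : vk k = S (ω k) (vk (k + 1)) := by
      have h1 := hseg k 1
      have h2 : Wseg k 1 = [ω k] := by
        rw [hWsegdef]; simp only
        rw [List.ofFn_succ]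
        simp
      have h3 : Tseg k 1 = S (ω k) := by
        rw [hTsegdef]; simp only [h2]
        simp
      rw [h1, h3]
    have key : ((‖a‖ : ℂ)) ^ 2 =
        @inner ℂ _ _ (adjoint (S (ω k)) a) (P (vk (k + 1))) := by
      calc ((‖a‖ : ℂ)) ^ 2 = @inner ℂ _ _ a a := (inner_self_eq_norm_sq_to_K a).symm
        _ = @inner ℂ _ _ a (vk k) := (hPinner (vk k) a (hPmem _)).symm
        _ = @inner ℂ _ _ a (S (ω k) (vk (k + 1))) := by rw [← hstep]
        _ = @inner ℂ _ _ (adjoint (S (ω k)) a) (vk (k + 1)) := (adjoint_inner_left _ _ _).symm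
        _ = @inner ℂ _ _ (adjoint (S (ω k)) a) (P (vk (k + 1))) :=
            hPinner _ _ (hinv _ _ (hPmem _))
    have hb : ‖a‖ ^ 2 ≤ ‖a‖ * ‖P (vk (k + 1))‖ := by
      have h4 : ‖a‖ ^ 2 = ‖@inner ℂ _ _ (adjoint (S (ω k)) a) (P (vk (k + 1)))‖ := by
        rw [← key]
        simp [norm_pow]
      rw [h4]
      calc ‖@inner ℂ _ _ (adjoint (S (ω k)) a) (P (vk (k + 1)))‖
          ≤ ‖adjoint (S (ω k)) a‖ * ‖P (vk (k + 1))‖ := norm_inner_le_norm _ _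
        _ ≤ ‖a‖ * ‖P (vk (k + 1))‖ :=
            mul_le_mul_of_nonneg_right (hcontr _ _) (norm_nonneg _)
    rcases eq_or_lt_of_le (norm_nonneg a) with h0 | h0
    · rw [← h0]; exact norm_nonneg _
    · nlinarith
  have hmono' : ∀ k0 k, k0 ≤ k → ‖P (vk k0)‖ ≤ ‖P (vk k)‖ := by
    intro k0 k hk
    induction k, hk using Nat.le_induction with
    | base => exact le_refl _
    | succ n hn ih => exact le_trans ih (hmono n)
  -- existence of a nonzero projection
  have hexists : ∃ k, P (vk k) ≠ 0 := by
    by_contra hc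
    push_neg at hc
    have hperp : ∀ k, vk k ∈ Mᗮ := by
      intro k
      rw [← Submodule.orthogonalProjectionOnto_eq_zero_iff]
      exact Subtype.ext (hc k)
    have hvzero : v = 0 := by
      have hKbot : (Submodule.span ℂ {x : H | ∃ (I J : List (Fin N)) (u : H), u ∈ M ∧
          ((I.map S).prod ∘L adjoint ((J.map S).prod)) u = x})ᗮ = ⊥ :=
        Submodule.topologicalClosure_eq_top_iff.mp hcyc
      have hvmem : v ∈ (Submodule.span ℂ {x : H | ∃ (I J : List (Fin N)) (u : H), u ∈ M ∧
          ((I.map S).prod ∘L adjoint ((J.map S).prod)) u = x})ᗮ := by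
        rw [Submodule.mem_orthogonal]
        intro x hx
        induction hx using Submodule.span_induction with
        | mem x hx =>
          obtain ⟨I, J, u, hu, rfl⟩ := hx
          rw [comp_apply, ← adjoint_inner_right]
          have hIv : adjoint ((I.map S).prod) v =
              if I = W I.length then vk I.length else 0 := by
            have h1 : v = T I.length (vk I.length) := (hfix0 _).symm
            rw [h1, ← comp_apply, hTdef]
            simp only
            rw [cuntz_lemA hiso I (W I.length) (by rw [hWlen])]
            by_cases hIW : I = W I.length
            · rw [if_pos hIW, if_pos hIW]; rfl
            · rw [if_neg hIW, if_neg hIW]; rfl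
          rw [hIv]
          by_cases hIW : I = W I.length
          · rw [if_pos hIW]
            exact ((Submodule.mem_orthogonal M _).mp (hperp I.length) _
              (cuntz_memM M hinv J u hu))
          · rw [if_neg hIW, inner_zero_right]
        | zero => rw [inner_zero_left]
        | add x y _ _ hx hy => rw [inner_add_left, hx, hy, add_zero]
        | smul c x _ hx => rw [inner_smul_left, hx, mul_zero]
      rw [hKbot] at hvmem
      exact Submodule.mem_bot ℂ |>.mp hvmem
    rw [hvzero, norm_zero] at hv
    exact zero_ne_one hv
  obtain ⟨k0, hk0⟩ := hexists
  have hc0 : 0 < ‖P (vk k0)‖ := norm_pos_iff.mpr hk0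
  -- Bessel: projections tend to zero
  have hlim : Filter.Tendsto (fun k => P (vk k)) Filter.atTop (nhds 0) := by
    have hcoef : ∀ x : H, Filter.Tendsto (fun k => @inner ℂ _ _ x (vk k))
        Filter.atTop (nhds 0) := by
      intro x
      have hsummable : Summable fun k => ‖@inner ℂ _ _ (vk k) x‖ ^ 2 :=
        horth.inner_products_summable x
      have h1 : Filter.Tendsto (fun k => ‖@inner ℂ _ _ (vk k) x‖ ^ 2)
          Filter.atTop (nhds 0) := hsummable.tendsto_atTop_zero
      have h2 : Filter.Tendsto (fun k => ‖@inner ℂ _ _ (vk k) x‖)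
          Filter.atTop (nhds 0) := by
        have h3 := (Real.continuous_sqrt.tendsto 0).comp h1
        rw [Real.sqrt_zero] at h3
        refine h3.congr fun k => ?_
        simp [Function.comp, Real.sqrt_sq (norm_nonneg _)]
      rw [tendsto_zero_iff_norm_tendsto_zero]
      convert h2 using 2 with k
      exact norm_inner_symm _ _
    have hrepr : ∀ k, P (vk k) =
        ∑ i : Fin (Module.finrank ℂ M),
          @inner ℂ _ _ ((stdOrthonormalBasis ℂ M i : M) : H) (vk k) •
            ((stdOrthonormalBasis ℂ M i : M) : H) := by
      intro k
      rw [hPdef]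
      simp only
      rw [(stdOrthonormalBasis ℂ M).orthogonalProjectionOnto_apply_eq_sum (vk k)]
      push_cast
      simp
    have : Filter.Tendsto (fun k => ∑ i : Fin (Module.finrank ℂ M),
        @inner ℂ _ _ ((stdOrthonormalBasis ℂ M i : M) : H) (vk k) •
          ((stdOrthonormalBasis ℂ M i : M) : H)) Filter.atTop (nhds 0) := by
      have h0 : (0 : H) = ∑ i : Fin (Module.finrank ℂ M),
          (0 : ℂ) • ((stdOrthonormalBasis ℂ M i : M) : H) := by simp
      rw [h0]
      exact tendsto_finset_sum _ fun i _ =>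
        (hcoef _).smul_const _
    refine Filter.Tendsto.congr (fun k => (hrepr k).symm) this
  have hnormlim : Filter.Tendsto (fun k => ‖P (vk k)‖) Filter.atTop (nhds 0) := by
    have := (continuous_norm.tendsto (0 : H)).comp hlim
    simpa [Function.comp_def] using this
  have : ‖P (vk k0)‖ ≤ 0 := by
    refine ge_of_tendsto hnormlim ?_
    filter_upwards [Filter.eventually_ge_atTop k0] with k hk
    exact hmono' k0 k hk
  linarith
end
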